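/- Let G be a graph on n vertices and let X ∪ Y be a partition of its vertex set. Let b be the number of edges between X and Y and c the number of edges inside Y. Then surp(G) ≥ b²/(4n²) − c. -/

import Mathlib

open Finset

def eBetween {n : ℕ} (G : SimpleGraph (Fin n)) [DecidableRel G.Adj]
    (s t : Finset (Fin n)) : ℕ :=
  (Finset.univ.filter fun p : Fin n × Fin n => p.1 ∈ s ∧ p.2 ∈ t ∧ G.Adj p.1 p.2).card

def cutSize {n : ℕ} (G : SimpleGraph (Fin n)) [DecidableRel G.Adj] (s : Finset (Fin n)) : ℕ :=
  (Finset.univ.filter fun p : Fin n × Fin n => G.Adj p.1 p.2 ∧ p.1 ∈ s ∧ p.2 ∉ s).card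

def maxCut {n : ℕ} (G : SimpleGraph (Fin n)) [DecidableRel G.Adj] : ℕ :=
  Finset.univ.powerset.sup (cutSize G)

noncomputable def surplus {n : ℕ} (G : SimpleGraph (Fin n)) [DecidableRel G.Adj] : ℝ :=
  (maxCut G : ℝ) - (G.edgeFinset.card : ℝ) / 2

namespace SurpAux

noncomputable def Ff {n : ℕ} (w : Fin n → Fin n → ℝ) (r : Fin n → ℝ) (p : Fin n → ℝ) : ℝ :=
  (∑ u, ∑ v, w u v * (p u * (1 - p v))) + ∑ u, r u * p u

lemma Ff_update {n : ℕ} (w : Fin n → Fin n → ℝ) (r : Fin n → ℝ) (hw : ∀ x, w x x = 0)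
    (p : Fin n → ℝ) (x : Fin n) (θ : ℝ) :
    Ff w r (Function.update p x θ) =
      (1 - θ) * Ff w r (Function.update p x 0) + θ * Ff w r (Function.update p x 1) := by
  have h1 : (∑ u, ∑ v, w u v * (Function.update p x θ u * (1 - Function.update p x θ v))) =
      (1 - θ) * (∑ u, ∑ v, w u v * (Function.update p x 0 u * (1 - Function.update p x 0 v))) +
      θ * (∑ u, ∑ v, w u v * (Function.update p x 1 u * (1 - Function.update p x 1 v))) := by
    rw [Finset.mul_sum, Finset.mul_sum, ← Finset.sum_add_distrib]
    refine Finset.sum_congr rfl fun u _ => ?_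
    rw [Finset.mul_sum, Finset.mul_sum, ← Finset.sum_add_distrib]
    refine Finset.sum_congr rfl fun v _ => ?_
    simp only [Function.update_apply]
    rcases eq_or_ne u x with hu | hu
    · rcases eq_or_ne v x with hv | hv
      · rw [show w u v = 0 by rw [hu, hv, hw]]; ring
      · simp only [if_pos hu, if_neg hv]; ring
    · rcases eq_or_ne v x with hv | hv
      · simp only [if_pos hv, if_neg hu]; ring
      · simp only [if_neg hu, if_neg hv]; ring
  have h2 : (∑ u, r u * Function.update p x θ u) =
      (1 - θ) * (∑ u, r u * Function.update p x 0 u) +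
      θ * (∑ u, r u * Function.update p x 1 u) := by
    rw [Finset.mul_sum, Finset.mul_sum, ← Finset.sum_add_distrib]
    refine Finset.sum_congr rfl fun u _ => ?_
    simp only [Function.update_apply]
    rcases eq_or_ne u x with hu | hu
    · simp only [if_pos hu]; ring
    · simp only [if_neg hu]; ring
  unfold Ff
  rw [h1, h2]; ring

lemma exists_round {n : ℕ} (w : Fin n → Fin n → ℝ) (r : Fin n → ℝ) (hw : ∀ x, w x x = 0)
    (X : Finset (Fin n)) :
    ∀ (k : ℕ) (T : Finset (Fin n)) (p : Fin n → ℝ), #T ≤ k →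
      (∀ x, 0 ≤ p x ∧ p x ≤ 1) → (∀ x ∉ X, p x = 0) → (∀ x ∉ T, p x = 0 ∨ p x = 1) →
      ∃ S ⊆ X, Ff w r p ≤ Ff w r (fun u => if u ∈ S then (1:ℝ) else 0) := by
  classical
  intro k
  induction k with
  | zero =>
    intro T p hT hb h0 hoff
    have hall : ∀ x, p x = 0 ∨ p x = 1 := by
      intro x
      refine hoff x fun hx => ?_
      have := Finset.card_pos.mpr ⟨x, hx⟩
      omega
    refine ⟨X.filter (fun x => p x = 1), Finset.filter_subset _ _, le_of_eq ?_⟩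
    congr 1
    funext u
    by_cases hu : u ∈ X
    · rcases hall u with h | h <;> simp [Finset.mem_filter, hu, h]
    · simp [Finset.mem_filter, hu, h0 u hu]
  | succ k ih =>
    intro T p hT hb h0 hoff
    by_cases hex : ∃ x, p x ≠ 0 ∧ p x ≠ 1
    · obtain ⟨x, hx0, hx1⟩ := hex
      have hxT : x ∈ T := by
        by_contra hxT
        rcases hoff x hxT with h | h
        exacts [hx0 h, hx1 h]
      have hxX : x ∈ X := by
        by_contra hxX
        exact hx0 (h0 x hxX)
      have hcard : #(T.erase x) ≤ k := by
        rw [Finset.card_erase_of_mem hxT]; omega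
      have hbp := hb x
      have hconv := Ff_update w r hw p x (p x)
      rw [Function.update_eq_self] at hconv
      have hoff' : ∀ (b : ℝ), b = 0 ∨ b = 1 →
          ∀ y ∉ T.erase x, Function.update p x b y = 0 ∨ Function.update p x b y = 1 := by
        intro b hbb y hy
        rcases eq_or_ne y x with rfl | hyx
        · rwa [Function.update_self]
        · rw [Function.update_of_ne hyx]
          exact hoff y fun hyT => hy (Finset.mem_erase.mpr ⟨hyx, hyT⟩)
      have hb' : ∀ (b : ℝ), 0 ≤ b ∧ b ≤ 1 → ∀ y, 0 ≤ Function.update p x b y ∧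
          Function.update p x b y ≤ 1 := by
        intro b hbb y
        rcases eq_or_ne y x with rfl | hyx
        · rwa [Function.update_self]
        · rw [Function.update_of_ne hyx]; exact hb y
      have h0' : ∀ (b : ℝ), ∀ y ∉ X, Function.update p x b y = 0 := by
        intro b y hy
        have hyx : y ≠ x := by rintro rfl; exact hy hxX
        rw [Function.update_of_ne hyx]
        exact h0 y hy
      by_cases hcmp : Ff w r (Function.update p x 0) ≤ Ff w r (Function.update p x 1)
      · obtain ⟨S, hS, hle⟩ := ih (T.erase x) (Function.update p x 1) hcard
          (hb' 1 ⟨zero_le_one, le_refl 1⟩) (h0' 1) (hoff' 1 (Or.inr rfl))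
        refine ⟨S, hS, le_trans ?_ hle⟩
        nlinarith [hconv]
      · obtain ⟨S, hS, hle⟩ := ih (T.erase x) (Function.update p x 0) hcard
          (hb' 0 ⟨le_refl 0, zero_le_one⟩) (h0' 0) (hoff' 0 (Or.inl rfl))
        refine ⟨S, hS, le_trans ?_ hle⟩
        nlinarith [hconv]
    · push_neg at hex
      refine ⟨X.filter (fun x => p x = 1), Finset.filter_subset _ _, le_of_eq ?_⟩
      congr 1
      funext u
      by_cases hu : u ∈ X
      · rcases (by by_contra h; push_neg at h; exact h.2 (hex u h.1) : p u = 0 ∨ p u = 1) with h | h <;>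
          simp [Finset.mem_filter, hu, h]
      · simp [Finset.mem_filter, hu, h0 u hu]


lemma card_filter_prod {n : ℕ} (Q : Fin n × Fin n → Prop) [DecidablePred Q] :
    ((univ.filter Q).card : ℝ) = ∑ u, ∑ v, if Q (u, v) then (1:ℝ) else 0 := by
  rw [Finset.card_filter]
  push_cast
  rw [Fintype.sum_prod_type]

section GX
variable {n : ℕ} (G : SimpleGraph (Fin n)) [DecidableRel G.Adj] (X : Finset (Fin n))

noncomputable def w (u v : Fin n) : ℝ := if u ∈ X ∧ v ∈ X ∧ G.Adj u v then 1 else 0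
noncomputable def cw (u v : Fin n) : ℝ := if u ∈ X ∧ v ∈ Xᶜ ∧ G.Adj u v then 1 else 0
noncomputable def r (u : Fin n) : ℝ := ∑ v, cw G X u v

lemma w_diag (u : Fin n) : w G X u u = 0 := by
  simp [w, fun h => G.irrefl h]

lemma w_symm (u v : Fin n) : w G X u v = w G X v u := by
  unfold w
  exact if_congr (by rw [G.adj_comm]; tauto) rfl rfl

lemma w_nonneg (u v : Fin n) : 0 ≤ w G X u v := by unfold w; positivity

lemma w_le_one (u v : Fin n) : w G X u v ≤ 1 := by
  unfold w; split <;> norm_num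

lemma cw_nonneg (u v : Fin n) : 0 ≤ cw G X u v := by unfold cw; positivity

lemma r_nonneg (u : Fin n) : 0 ≤ r G X u :=
  Finset.sum_nonneg fun v _ => cw_nonneg G X u v

lemma r_le (u : Fin n) : r G X u ≤ n := by
  have : r G X u ≤ ∑ _v : Fin n, (1:ℝ) :=
    Finset.sum_le_sum fun v _ => by unfold cw; split <;> norm_num
  simpa using this

lemma r_zero (u : Fin n) (hu : u ∉ X) : r G X u = 0 := by
  unfold r cw
  refine Finset.sum_eq_zero fun v _ => ?_
  simp [hu]

lemma hB : (eBetween G X Xᶜ : ℝ) = ∑ u, r G X u := by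
  unfold eBetween
  rw [card_filter_prod]
  rfl

lemma sum_swap_w (f : Fin n → ℝ) :
    (∑ u, ∑ v, w G X u v * f u) = ∑ u, ∑ v, w G X u v * f v := by
  rw [Finset.sum_comm]
  exact Finset.sum_congr rfl fun a _ => Finset.sum_congr rfl fun b _ => by rw [w_symm]

lemma hE : 2 * ((G.edgeFinset.card : ℝ)) =
    (∑ u, ∑ v, w G X u v) + 2 * (∑ u, r G X u) + (eBetween G Xᶜ Xᶜ : ℝ) := by
  have h2e : ((2 * G.edgeFinset.card : ℕ) : ℝ) =
      ∑ u, ∑ v, (if G.Adj u v then (1:ℝ) else 0) := by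
    rw [SimpleGraph.two_mul_card_edgeFinset, card_filter_prod]
  have hdec : ∀ u v : Fin n, (if G.Adj u v then (1:ℝ) else 0) =
      w G X u v + cw G X u v + cw G X v u + (if u ∈ Xᶜ ∧ v ∈ Xᶜ ∧ G.Adj u v then (1:ℝ) else 0) := by
    intro u v
    unfold w cw
    by_cases h1 : u ∈ X <;> by_cases h2 : v ∈ X <;> by_cases h3 : G.Adj u v <;>
      simp [h1, h2, h3, G.adj_comm]
  have hcw' : (∑ u, ∑ v, cw G X v u) = ∑ u, ∑ v, cw G X u v := by rw [Finset.sum_comm]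
  have hCC : (eBetween G Xᶜ Xᶜ : ℝ) =
      ∑ u, ∑ v, (if u ∈ Xᶜ ∧ v ∈ Xᶜ ∧ G.Adj u v then (1:ℝ) else 0) := by
    unfold eBetween; rw [card_filter_prod]
  push_cast at h2e
  rw [h2e]
  simp only [hdec, Finset.sum_add_distrib]
  rw [hcw', hCC]
  unfold r
  rw [Finset.mul_sum]
  simp only [two_mul, Finset.sum_add_distrib]
  ring

lemma hcut (S : Finset (Fin n)) (hS : S ⊆ X) :
    (∑ u, ∑ v, w G X u v * ((if u ∈ S then (1:ℝ) else 0) * (1 - if v ∈ S then (1:ℝ) else 0)))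
      + (∑ u, r G X u * (if u ∈ S then (1:ℝ) else 0)) ≤ (cutSize G S : ℝ) := by
  have hrw : (cutSize G S : ℝ) =
      ∑ u, ∑ v, (if G.Adj u v ∧ u ∈ S ∧ v ∉ S then (1:ℝ) else 0) := by
    unfold cutSize; rw [card_filter_prod]
  rw [hrw]
  have : ∀ u, r G X u * (if u ∈ S then (1:ℝ) else 0) =
      ∑ v, cw G X u v * (if u ∈ S then (1:ℝ) else 0) := by
    intro u; unfold r; rw [Finset.sum_mul]
  simp only [this, ← Finset.sum_add_distrib]
  refine Finset.sum_le_sum fun u _ => Finset.sum_le_sum fun v _ => ?_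
  by_cases hu : u ∈ S
  · by_cases hv : v ∈ S
    · have hvX : v ∈ X := hS hv
      simp [w, cw, hu, hv, hvX]
    · by_cases ha : G.Adj u v
      · by_cases hvX : v ∈ X <;> simp [w, cw, hu, hv, ha, hvX] <;> split <;> norm_num
      · simp [w, cw, hu, hv, ha]
  · simp only [if_neg hu, mul_zero, zero_mul, mul_zero, add_zero]
    split <;> norm_num

end GX



lemma quad_ineq (a b : ℝ) :
    1/4 + a/2 - b/2 - (a^2 + b^2)/2 ≤ (1/2 + a) * (1 - (1/2 + b)) := by
  nlinarith [sq_nonneg (a - b)]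

section GX2
variable {n : ℕ} (G : SimpleGraph (Fin n)) [DecidableRel G.Adj] (X : Finset (Fin n))

noncomputable def pstar (u : Fin n) : ℝ := (if u ∈ X then (1:ℝ) else 0)/2 + r G X u/(2*n)

lemma sum_w_le (u : Fin n) : (∑ v, w G X u v) ≤ (n:ℝ) := by
  have : (∑ v, w G X u v) ≤ ∑ _v : Fin n, (1:ℝ) :=
    Finset.sum_le_sum fun v _ => w_le_one G X u v
  simpa using this

lemma eval (hn : 0 < n) :
    (∑ u, ∑ v, w G X u v)/4 + (∑ u, r G X u)/2 + (∑ u, (r G X u)^2)/(4*(n:ℝ))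
      ≤ Ff (w G X) (r G X) (pstar G X) := by
  have hn' : (0:ℝ) < n := by exact_mod_cast hn
  -- linear part
  have hSl : (∑ u, r G X u * pstar G X u)
      = (∑ u, r G X u)/2 + (∑ u, (r G X u)^2)/(2*(n:ℝ)) := by
    have : ∀ u : Fin n, r G X u * pstar G X u = r G X u/2 + (r G X u)^2/(2*(n:ℝ)) := by
      intro u
      by_cases hu : u ∈ X
      · simp only [pstar, if_pos hu]
        field_simp
      · simp [pstar, if_neg hu, r_zero G X u hu]
    rw [Finset.sum_congr rfl fun u _ => this u, Finset.sum_add_distrib,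
      ← Finset.sum_div, ← Finset.sum_div]
  -- quadratic part
  have key : ∀ u v : Fin n,
      w G X u v/4 + w G X u v * (r G X u/(2*(n:ℝ)))/2 - w G X u v * (r G X v/(2*(n:ℝ)))/2
        - (w G X u v * (r G X u/(2*(n:ℝ)))^2/2 + w G X u v * (r G X v/(2*(n:ℝ)))^2/2)
      ≤ w G X u v * (pstar G X u * (1 - pstar G X v)) := by
    intro u v
    by_cases h : u ∈ X ∧ v ∈ X ∧ G.Adj u v
    · have hw1 : w G X u v = 1 := by simp [w, h]
      have hpu : pstar G X u = 1/2 + r G X u/(2*(n:ℝ)) := by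
        simp only [pstar, if_pos h.1]
      have hpv : pstar G X v = 1/2 + r G X v/(2*(n:ℝ)) := by
        simp only [pstar, if_pos h.2.1]
      rw [hw1, hpu, hpv]
      have := quad_ineq (r G X u/(2*(n:ℝ))) (r G X v/(2*(n:ℝ)))
      linarith
    · have hw0 : w G X u v = 0 := by simp [w, h]
      rw [hw0]; simp
  have hsum := Finset.sum_le_sum fun u (_ : u ∈ (univ : Finset (Fin n))) =>
    Finset.sum_le_sum fun v (_ : v ∈ (univ : Finset (Fin n))) => key u v
  -- compute the LHS of hsum
  have hA := sum_swap_w G X (fun u => r G X u/(2*(n:ℝ)))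
  have hQ := sum_swap_w G X (fun u => (r G X u/(2*(n:ℝ)))^2)
  have hexp : (∑ u, ∑ v, (w G X u v/4 + w G X u v * (r G X u/(2*(n:ℝ)))/2
        - w G X u v * (r G X v/(2*(n:ℝ)))/2
        - (w G X u v * (r G X u/(2*(n:ℝ)))^2/2 + w G X u v * (r G X v/(2*(n:ℝ)))^2/2)))
      = (∑ u, ∑ v, w G X u v)/4 - (∑ u, ∑ v, w G X u v * (r G X u/(2*(n:ℝ)))^2) := by
    simp only [Finset.sum_sub_distrib, Finset.sum_add_distrib, ← Finset.sum_div]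
    rw [← hA, ← hQ]
    ring
  -- bound the quadratic error term
  have herr : (∑ u, ∑ v, w G X u v * (r G X u/(2*(n:ℝ)))^2)
      ≤ (∑ u, (r G X u)^2)/(4*(n:ℝ)) := by
    have h1 : ∀ u : Fin n, (∑ v, w G X u v * (r G X u/(2*(n:ℝ)))^2)
        ≤ (r G X u)^2/(4*(n:ℝ)) := by
      intro u
      rw [← Finset.sum_mul]
      have h2 : (∑ v, w G X u v) * (r G X u/(2*(n:ℝ)))^2 ≤ (n:ℝ) * (r G X u/(2*(n:ℝ)))^2 :=
        mul_le_mul_of_nonneg_right (sum_w_le G X u) (sq_nonneg _)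
      refine h2.trans (le_of_eq ?_)
      field_simp
      ring
    calc (∑ u, ∑ v, w G X u v * (r G X u/(2*(n:ℝ)))^2)
        ≤ ∑ u, (r G X u)^2/(4*(n:ℝ)) := Finset.sum_le_sum fun u _ => h1 u
      _ = (∑ u, (r G X u)^2)/(4*(n:ℝ)) := by rw [← Finset.sum_div]
  rw [hexp] at hsum
  have h24 : (∑ u, (r G X u)^2)/(2*(n:ℝ)) = 2*((∑ u, (r G X u)^2)/(4*(n:ℝ))) := by
    field_simp; ring
  unfold Ff
  rw [hSl, h24]
  linarith

end GX2

end SurpAux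

open SurpAux in
/-- Let `X ∪ Y` be a partition of the vertex set of `G` (with `Y = Xᶜ`), let `b` be the
number of edges between `X` and `Y`, and `c` the number of edges inside `Y` (here
`eBetween G Xᶜ Xᶜ = 2c`). Then `surp(G) ≥ b²/(4n²) − c`. -/
theorem surplus_ge_cross_edges_sq {n : ℕ} (G : SimpleGraph (Fin n))
    [DecidableRel G.Adj] (X : Finset (Fin n)) (b c : ℝ)
    (hb : b = (eBetween G X Xᶜ : ℝ))
    (hc : c = (eBetween G Xᶜ Xᶜ : ℝ) / 2) :
    b ^ 2 / (4 * (n : ℝ) ^ 2) - c ≤ surplus G := by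
  classical
  rcases Nat.eq_zero_or_pos n with hn | hn
  · subst hn
    have hb0 : b = 0 := by rw [hb]; simp [eBetween]
    have hc0 : c = 0 := by rw [hc]; simp [eBetween]
    have he : G.edgeFinset.card = 0 := by
      have h2 := SimpleGraph.two_mul_card_edgeFinset (G := G)
      simp only [Finset.univ_eq_empty, Finset.filter_empty, Finset.card_empty] at h2
      omega
    unfold surplus
    rw [hb0, hc0, he]
    norm_num
  · have hn' : (0:ℝ) < n := by exact_mod_cast hn
    have hb1 : ∀ x, 0 ≤ pstar G X x ∧ pstar G X x ≤ 1 := by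
      intro x
      have h1 := r_le G X x
      have h2 := r_nonneg G X x
      have h3 : r G X x/(2*(n:ℝ)) ≤ 1/2 := by
        rw [div_le_iff₀ (by positivity)]; linarith
      have h4 : (0:ℝ) ≤ r G X x/(2*(n:ℝ)) := by positivity
      constructor
      · unfold pstar; split <;> linarith
      · unfold pstar; split <;> linarith
    have h0 : ∀ x ∉ X, pstar G X x = 0 := by
      intro x hx
      simp [pstar, hx, r_zero G X x hx]
    obtain ⟨S, hSX, hle⟩ := exists_round (w G X) (r G X)
      (w_diag G X) X n univ (pstar G X) (by simp) hb1 h0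
      (fun x hx => absurd (Finset.mem_univ x) hx)
    have h1 := eval G X hn
    have h2' : Ff (w G X) (r G X)
        (fun u => if u ∈ S then (1:ℝ) else 0) ≤ (cutSize G S : ℝ) := by
      unfold Ff
      exact hcut G X S hSX
    have h3 : (cutSize G S : ℝ) ≤ (maxCut G : ℝ) := by
      exact_mod_cast Nat.cast_le.mpr
        (Finset.le_sup (f := cutSize G) (Finset.mem_powerset.mpr (Finset.subset_univ S)))
    have hEe := hE G X
    have hBb : b = ∑ u, r G X u := by rw [hb, hB G X]
    have hc' : (0:ℝ) ≤ (eBetween G Xᶜ Xᶜ : ℝ) := Nat.cast_nonneg _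
    have hcauchy : (∑ u, r G X u)^2 ≤ (n:ℝ) * ∑ u, (r G X u)^2 := by
      have h := sq_sum_le_card_mul_sum_sq (s := (univ : Finset (Fin n))) (f := r G X)
      simpa using h
    have hq : (∑ u, r G X u)^2/(4*(n:ℝ)^2) ≤ (∑ u, (r G X u)^2)/(4*(n:ℝ)) := by
      rw [div_le_div_iff₀ (by positivity) (by positivity)]
      nlinarith
    unfold surplus
    rw [hc, hBb]
    linarith
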